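/- arXiv:2102.04083 — 2 statements merged into one kernel-verified Lean document; each statement's English description precedes it below -/
import Mathlib

section
/- Let (X, m) be a probability space and T a Markov operator on L²(m) (positive, T1 = 1, contraction) whose restriction to L²₀(m) has spectral radius ρ < 1. Then for every f ∈ L²(m), Tⁿf → ∫f dm m-almost everywhere as n → ∞. -/
open MeasureTheory Filter
open MeasureTheory Filter
open scoped ENNReal NNReal

theorem aux_tendsto_ae {X : Type*} [MeasurableSpace X] (m : Measure X)
    (g : ℕ → Lp ℝ 2 m) (hsum : Summable (fun n => ‖g n‖ ^ 2)) :
    ∀ᵐ x ∂m, Tendsto (fun n : ℕ => (g n : X → ℝ) x) atTop (nhds 0) := by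
  have hmeas : ∀ n, AEMeasurable (fun x => ((‖(g n : X → ℝ) x‖₊ : ℝ≥0∞)) ^ 2) m := fun n =>
    ((Lp.aestronglyMeasurable (g n)).aemeasurable.nnnorm.coe_nnreal_ennreal).pow_const 2
  have hint : ∀ n, ∫⁻ x, ((‖(g n : X → ℝ) x‖₊ : ℝ≥0∞)) ^ 2 ∂m = (eLpNorm (g n) 2 m) ^ 2 := by
    intro n
    rw [eLpNorm_eq_lintegral_rpow_enorm_toReal two_ne_zero ENNReal.ofNat_ne_top]
    simp only [enorm_eq_nnnorm]
    have h2 : (2 : ℝ≥0∞).toReal = 2 := by simp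
    rw [h2, ← ENNReal.rpow_natCast _ 2, ← ENNReal.rpow_mul]
    norm_num
  have hint2 : ∀ n, (eLpNorm (g n) 2 m) ^ 2 = ENNReal.ofReal (‖g n‖ ^ 2) := by
    intro n
    rw [Lp.norm_def, ← ENNReal.toReal_pow,
      ENNReal.ofReal_toReal (by simp [ENNReal.pow_eq_top_iff, Lp.eLpNorm_ne_top (g n)])]
  have key : ∫⁻ x, ∑' n, ((‖(g n : X → ℝ) x‖₊ : ℝ≥0∞)) ^ 2 ∂m ≠ ⊤ := by
    rw [lintegral_tsum hmeas]
    simp_rw [hint, hint2]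
    rw [← ENNReal.ofReal_tsum_of_nonneg (fun n => sq_nonneg _) hsum]
    exact ENNReal.ofReal_ne_top
  have hae : ∀ᵐ x ∂m, ∑' n, ((‖(g n : X → ℝ) x‖₊ : ℝ≥0∞)) ^ 2 < ⊤ :=
    ae_lt_top' (AEMeasurable.ennreal_tsum hmeas) key
  filter_upwards [hae] with x hx
  have hs : Summable (fun n => (‖(g n : X → ℝ) x‖₊) ^ 2) := by
    rw [← ENNReal.tsum_coe_ne_top_iff_summable]
    simpa [ENNReal.coe_pow] using hx.ne
  have hsR : Summable (fun n => ((g n : X → ℝ) x) ^ 2) := by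
    have := NNReal.summable_coe.2 hs
    simpa [← sq_abs, Real.norm_eq_abs] using this
  have h0 : Tendsto (fun n => ((g n : X → ℝ) x) ^ 2) atTop (nhds 0) :=
    hsR.tendsto_atTop_zero
  rw [tendsto_zero_iff_abs_tendsto_zero]
  have := h0.sqrt
  simpa [Real.sqrt_sq_eq_abs, Function.comp_def] using this

/-- If a Markov operator `T` on `L²(m)` of a probability space has spectral
radius `ρ < 1` on the mean-zero subspace `L²₀(m)`, then `Tⁿf → ∫ f dm`
`m`-almost everywhere for every `f ∈ L²(m)`. -/

theorem tendsto_ae_of_spectral_gap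
    {X : Type*} [MeasurableSpace X] (m : Measure X) [IsProbabilityMeasure m]
    (T : Lp ℝ 2 m →L[ℝ] Lp ℝ 2 m)
    -- positivity
    (hpos : ∀ g : Lp ℝ 2 m, 0 ≤ᵐ[m] ⇑g → 0 ≤ᵐ[m] ⇑(T g))
    -- `T 1 = 1`
    (hconst : T ((memLp_const (1 : ℝ)).toLp fun _ => (1 : ℝ)) =
      (memLp_const (1 : ℝ)).toLp fun _ => (1 : ℝ))
    -- contraction
    (hcontr : ∀ g : Lp ℝ 2 m, ‖T g‖ ≤ ‖g‖)
    -- `T` preserves `L²₀(m)`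
    (hzero : ∀ g : Lp ℝ 2 m, (∫ x, g x ∂m) = 0 → (∫ x, (T g) x ∂m) = 0)
    (ρ : ℝ) (hρ0 : 0 ≤ ρ) (hρ1 : ρ < 1)
    -- the restriction of `T` to `L²₀(m)` has spectral radius `ρ`:
    -- for every `α ∈ (ρ, 1)`, eventually `‖Tⁿ|_{L²₀}‖ ≤ αⁿ`
    (hspec : ∀ α : ℝ, ρ < α → α < 1 → ∃ N : ℕ, ∀ n ≥ N, ∀ g : Lp ℝ 2 m,
      (∫ x, g x ∂m) = 0 → ‖(T ^ n) g‖ ≤ α ^ n * ‖g‖)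
    (f : Lp ℝ 2 m) :
    ∀ᵐ x ∂m, Tendsto (fun n : ℕ => (T ^ n) f x) atTop (nhds (∫ y, f y ∂m)) := by
  classical
  set c : ℝ := ∫ y, f y ∂m with hc
  set one : Lp ℝ 2 m := (memLp_const (1 : ℝ)).toLp fun _ => (1 : ℝ) with hone
  have hone_ae : ⇑one =ᵐ[m] fun _ => (1 : ℝ) := MemLp.coeFn_toLp _
  set f₀ : Lp ℝ 2 m := f - c • one with hf₀
  -- integral of one is 1
  have hint_one : ∫ x, one x ∂m = 1 := by
    rw [integral_congr_ae hone_ae]; simp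
  -- f₀ has mean zero
  have hint_f₀ : ∫ x, f₀ x ∂m = 0 := by
    have h1 : ⇑f₀ =ᵐ[m] ⇑f - ⇑(c • one) := Lp.coeFn_sub f (c • one)
    have h2 : ⇑(c • one) =ᵐ[m] c • ⇑one := Lp.coeFn_smul c one
    have hintf : Integrable (⇑f) m := (Lp.memLp f).integrable (by norm_num)
    have hintone : Integrable (⇑one) m := (Lp.memLp one).integrable (by norm_num)
    calc ∫ x, f₀ x ∂m = ∫ x, (f x - c * one x) ∂m := by
          refine integral_congr_ae ?_
          filter_upwards [h1, h2] with x hx1 hx2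
          simp [hx1, hx2]
      _ = (∫ x, f x ∂m) - c * ∫ x, one x ∂m := by
          rw [integral_sub hintf (hintone.const_mul c), integral_const_mul]
      _ = 0 := by rw [hint_one, ← hc]; ring
  -- T^n fixes one
  have hTn_one : ∀ n : ℕ, (T ^ n) one = one := by
    intro n
    induction n with
    | zero => simp
    | succ n ih =>
      rw [pow_succ, ContinuousLinearMap.mul_apply]
      rw [show T one = one from hconst, ih]
  -- decomposition
  have hdecomp : ∀ n : ℕ, (T ^ n) f = (T ^ n) f₀ + c • one := by
    intro n
    have : f = f₀ + c • one := by rw [hf₀]; abel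
    rw [this, map_add, (T ^ n).map_smul, hTn_one]
  -- choose α
  set α : ℝ := (ρ + 1) / 2 with hα
  have hρα : ρ < α := by rw [hα]; linarith
  have hα1 : α < 1 := by rw [hα]; linarith
  have hα0 : 0 ≤ α := by rw [hα]; linarith
  obtain ⟨N, hN⟩ := hspec α hρα hα1
  -- summability of squared norms
  have hsum : Summable (fun n : ℕ => ‖(T ^ n) f₀‖ ^ 2) := by
    rw [← summable_nat_add_iff N]
    have hgeom : Summable (fun n : ℕ => (α ^ 2) ^ n * ((α ^ 2) ^ N * ‖f₀‖ ^ 2)) :=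
      (summable_geometric_of_lt_one (by positivity) (by nlinarith)).mul_right _
    refine Summable.of_nonneg_of_le (fun n => sq_nonneg _) (fun n => ?_) hgeom
    have hb := hN (n + N) (Nat.le_add_left _ _) f₀ hint_f₀
    have h0 : (0 : ℝ) ≤ ‖(T ^ (n + N)) f₀‖ := norm_nonneg _
    have hsq : ‖(T ^ (n + N)) f₀‖ ^ 2 ≤ (α ^ (n + N) * ‖f₀‖) ^ 2 := by
      apply sq_le_sq' _ hb
      nlinarith [norm_nonneg f₀, pow_nonneg hα0 (n + N)]
    calc ‖(T ^ (n + N)) f₀‖ ^ 2 ≤ (α ^ (n + N) * ‖f₀‖) ^ 2 := hsq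
      _ = (α ^ 2) ^ n * ((α ^ 2) ^ N * ‖f₀‖ ^ 2) := by
          rw [mul_pow, ← pow_mul, mul_comm (n + N) 2, pow_mul, pow_add]; ring
  -- a.e. convergence of T^n f₀ to 0
  have hae0 := aux_tendsto_ae m (fun n => (T ^ n) f₀) hsum
  -- a.e. pointwise identity for all n
  have haeeq : ∀ᵐ x ∂m, ∀ n : ℕ, ((T ^ n) f : X → ℝ) x = ((T ^ n) f₀ : X → ℝ) x + c := by
    rw [ae_all_iff]
    intro n
    have h1 : ⇑((T ^ n) f) =ᵐ[m] ⇑((T ^ n) f₀ + c • one) := by rw [hdecomp n]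
    have h2 : ⇑((T ^ n) f₀ + c • one) =ᵐ[m] ⇑((T ^ n) f₀) + ⇑(c • one) :=
      Lp.coeFn_add _ _
    have h3 : ⇑(c • one) =ᵐ[m] c • ⇑one := Lp.coeFn_smul c one
    filter_upwards [h1, h2, h3, hone_ae] with x hx1 hx2 hx3 hx4
    rw [hx1, hx2, Pi.add_apply, hx3, Pi.smul_apply, hx4, smul_eq_mul, mul_one]
  filter_upwards [hae0, haeeq] with x hx0 hxeq
  have : Tendsto (fun n : ℕ => ((T ^ n) f₀ : X → ℝ) x + c) atTop (nhds (0 + c)) :=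
    hx0.add tendsto_const_nhds
  rw [zero_add] at this
  exact this.congr (fun n => (hxeq n).symm)
end

section
/- Let (X, m) be a probability space and T a Markov operator on L²(m) whose restriction to L²₀(m) has spectral radius ρ < 1. Then for every f ∈ L²(m), for m-almost every x, limsup_{n→∞} |Tⁿf(x) − ∫f dm|^{1/n} ≤ ρ^{1/2}. -/
open MeasureTheory Filter
open scoped ENNReal NNReal

/-- If a Markov operator `T` on `L²(m)` of a probability space has spectral
radius `ρ < 1` on the mean-zero subspace `L²₀(m)`, then for `m`-almost every `x`,
`limsup |Tⁿf(x) − ∫ f dm|^{1/n} ≤ ρ^{1/2}`. -/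
theorem limsup_rpow_le_sqrt_spectral_radius
    {X : Type*} [MeasurableSpace X] (m : Measure X) [IsProbabilityMeasure m]
    (T : Lp ℝ 2 m →L[ℝ] Lp ℝ 2 m)
    -- positivity
    (hpos : ∀ g : Lp ℝ 2 m, 0 ≤ᵐ[m] ⇑g → 0 ≤ᵐ[m] ⇑(T g))
    -- `T 1 = 1`
    (hconst : T ((memLp_const (1 : ℝ)).toLp fun _ => (1 : ℝ)) =
      (memLp_const (1 : ℝ)).toLp fun _ => (1 : ℝ))
    -- contraction
    (hcontr : ∀ g : Lp ℝ 2 m, ‖T g‖ ≤ ‖g‖)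
    -- `T` preserves `L²₀(m)`
    (hzero : ∀ g : Lp ℝ 2 m, (∫ x, g x ∂m) = 0 → (∫ x, (T g) x ∂m) = 0)
    (ρ : ℝ) (hρ0 : 0 ≤ ρ) (hρ1 : ρ < 1)
    -- the restriction of `T` to `L²₀(m)` has spectral radius `ρ`:
    -- for every `α ∈ (ρ, 1)`, eventually `‖Tⁿ|_{L²₀}‖ ≤ αⁿ`
    (hspec : ∀ α : ℝ, ρ < α → α < 1 → ∃ N : ℕ, ∀ n ≥ N, ∀ g : Lp ℝ 2 m,
      (∫ x, g x ∂m) = 0 → ‖(T ^ n) g‖ ≤ α ^ n * ‖g‖)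
    (f : Lp ℝ 2 m) :
    ∀ᵐ x ∂m,
      Filter.limsup
          (fun n : ℕ => |(T ^ n) f x - ∫ y, f y ∂m| ^ ((1 : ℝ) / n)) atTop ≤
        Real.sqrt ρ := by
  set c : ℝ := ∫ y, f y ∂m with hc
  set one : Lp ℝ 2 m := (memLp_const (1 : ℝ)).toLp fun _ => (1 : ℝ) with hone
  set g : Lp ℝ 2 m := f - c • one with hgdef
  have hone_ae : ⇑one =ᵐ[m] fun _ => (1 : ℝ) := MemLp.coeFn_toLp _
  have hg_ae : ⇑g =ᵐ[m] fun x => f x - c := by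
    filter_upwards [Lp.coeFn_sub f (c • one), Lp.coeFn_smul c one, hone_ae] with x h1 h2 h3
    simp only [hgdef] at h1 ⊢
    rw [h1, Pi.sub_apply, h2, Pi.smul_apply, h3, smul_eq_mul, mul_one]
  have hint_g : (∫ x, g x ∂m) = 0 := by
    rw [integral_congr_ae hg_ae,
      integral_sub ((Lp.memLp f).integrable one_le_two) (integrable_const c)]
    simp [hc]
  have hTn_one : ∀ n : ℕ, (T ^ n) one = one := by
    intro n
    induction n with
    | zero => simp
    | succ n ih => rw [pow_succ, ContinuousLinearMap.mul_apply, hconst, ih]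
  have hTf : ∀ n : ℕ, (T ^ n) f = (T ^ n) g + c • one := by
    intro n
    have hf : f = g + c • one := by rw [hgdef, sub_add_cancel]
    rw [hf, map_add, ContinuousLinearMap.map_smul, hTn_one]
  have hpt : ∀ᵐ x ∂m, ∀ n : ℕ, (T ^ n) f x - c = (T ^ n) g x := by
    rw [ae_all_iff]
    intro n
    have h := hTf n
    filter_upwards [Lp.coeFn_add ((T ^ n) g) (c • one), Lp.coeFn_smul c one, hone_ae]
      with x h1 h2 h3
    rw [h, h1, Pi.add_apply, h2, Pi.smul_apply, h3, smul_eq_mul, mul_one, add_sub_cancel_right]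
  -- nonnegativity and coboundedness of the sequence
  have hu_nonneg : ∀ (x : X) (n : ℕ), 0 ≤ |(T ^ n) g x| ^ ((1 : ℝ) / n) :=
    fun x n => Real.rpow_nonneg (abs_nonneg _) _
  -- key step: for ρ < α < β < 1, a.e. limsup ≤ √β
  have key : ∀ α β : ℝ, ρ < α → α < β → β < 1 →
      ∀ᵐ x ∂m, limsup (fun n : ℕ => |(T ^ n) g x| ^ ((1 : ℝ) / n)) atTop ≤ Real.sqrt β := by
    intro α β hρα hαβ hβ1
    have hα0 : 0 < α := lt_of_le_of_lt hρ0 hρα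
    have hα1 : α < 1 := hαβ.trans hβ1
    have hβ0 : 0 < β := hα0.trans hαβ
    by_cases hgz : ‖g‖ = 0
    · -- g = 0 : the sequence is eventually 0
      have hg0 : g = 0 := norm_eq_zero.mp hgz
      have hz : ∀ᵐ x ∂m, ∀ n : ℕ, (T ^ n) g x = 0 := by
        rw [ae_all_iff]
        intro n
        have : (T ^ n) g = 0 := by rw [hg0, map_zero]
        rw [this]
        exact Lp.coeFn_zero ℝ 2 m
      filter_upwards [hz] with x hx
      apply Filter.limsup_le_of_le (isCoboundedUnder_le_of_le atTop (hu_nonneg x))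
      filter_upwards [eventually_ge_atTop 1] with n hn
      rw [hx n, abs_zero, Real.zero_rpow]
      · exact Real.sqrt_nonneg β
      · positivity
    · have hgpos : 0 < ‖g‖ := lt_of_le_of_ne (norm_nonneg g) (Ne.symm hgz)
      obtain ⟨N, hN⟩ := hspec α hρα hα1
      set t : ℕ → ℝ := fun n => Real.sqrt α ^ n * ‖g‖ with ht
      have htpos : ∀ n, 0 < t n := fun n => mul_pos (pow_pos (Real.sqrt_pos.2 hα0) n) hgpos
      set s : ℕ → Set X := fun n =>
        {x | ENNReal.ofReal (t n) ≤ (‖(T ^ n) g x‖₊ : ℝ≥0∞)} with hs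
      set C : ℝ := α⁻¹ ^ N with hC
      have hC1 : 1 ≤ C := by
        rw [hC]
        exact one_le_pow₀ (one_le_inv_iff₀.2 ⟨hα0, hα1.le⟩)
      have hmb : ∀ n, m (s n) ≤ ENNReal.ofReal (C * α ^ n) := by
        intro n
        by_cases hn : N ≤ n
        · have hcheb := Lp.meas_ge_le_mul_pow_enorm ((T ^ n) g) two_ne_zero ENNReal.ofNat_ne_top
            (ε := ENNReal.ofReal (t n)) (ENNReal.ofReal_pos.2 (htpos n)).ne'
          refine hcheb.trans ?_
          have h2 : (2 : ℝ≥0∞).toReal = (2 : ℝ) := by simp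
          rw [h2, ← ENNReal.ofReal_inv_of_pos (htpos n),
            ENNReal.ofReal_rpow_of_pos (inv_pos.2 (htpos n)),
            ENNReal.ofReal_rpow_of_nonneg (norm_nonneg _) (by norm_num : (0:ℝ) ≤ 2),
            ← ENNReal.ofReal_mul (Real.rpow_nonneg (inv_nonneg.2 (htpos n).le) _)]
          apply ENNReal.ofReal_le_ofReal
          have hTb : ‖(T ^ n) g‖ ≤ α ^ n * ‖g‖ := hN n hn g hint_g
          have hsq : ∀ y : ℝ, 0 ≤ y → y ^ (2 : ℝ) = y ^ 2 := fun y hy => by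
            rw [← Real.rpow_natCast y 2]; norm_num
          rw [hsq _ (inv_nonneg.2 (htpos n).le), hsq _ (norm_nonneg _)]
          have hbound : (t n)⁻¹ ^ 2 * ‖(T ^ n) g‖ ^ 2 ≤ (t n)⁻¹ ^ 2 * (α ^ n * ‖g‖) ^ 2 := by
            apply mul_le_mul_of_nonneg_left _ (by positivity)
            exact pow_le_pow_left₀ (norm_nonneg _) hTb 2
          refine hbound.trans ?_
          have htsq : t n ^ 2 = α ^ n * ‖g‖ ^ 2 := by
            rw [ht]
            rw [mul_pow, ← pow_mul, pow_mul', Real.sq_sqrt hα0.le]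
          rw [inv_pow, htsq]
          have heq : (α ^ n * ‖g‖ ^ 2)⁻¹ * (α ^ n * ‖g‖) ^ 2 = α ^ n := by
            field_simp
          rw [heq]
          exact le_mul_of_one_le_left (by positivity) hC1
        · push_neg at hn
          calc m (s n) ≤ m Set.univ := measure_mono (Set.subset_univ _)
            _ = 1 := measure_univ
            _ ≤ ENNReal.ofReal (C * α ^ n) := by
                rw [ENNReal.one_le_ofReal, hC, inv_pow, ← div_eq_inv_mul,
                  one_le_div (pow_pos hα0 N)]
                exact pow_le_pow_of_le_one hα0.le hα1.le hn.le
      have htsum : (∑' n, m (s n)) ≠ ⊤ := by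
        apply ne_top_of_le_ne_top _ (ENNReal.tsum_le_tsum hmb)
        rw [← ENNReal.ofReal_tsum_of_nonneg (fun n => by positivity)
          ((summable_geometric_of_lt_one hα0.le hα1).mul_left C)]
        exact ENNReal.ofReal_ne_top
      -- eventual comparison of thresholds
      have hsmall : ∀ᶠ n : ℕ in atTop, t n < Real.sqrt β ^ n := by
        have hr0 : 0 ≤ Real.sqrt α / Real.sqrt β := by positivity
        have hr1 : Real.sqrt α / Real.sqrt β < 1 := by
          rw [div_lt_one (Real.sqrt_pos.2 hβ0)]
          exact Real.sqrt_lt_sqrt hα0.le hαβ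
        have hten : Tendsto (fun n : ℕ => (Real.sqrt α / Real.sqrt β) ^ n * ‖g‖)
            atTop (nhds 0) := by
          simpa using (tendsto_pow_atTop_nhds_zero_of_lt_one hr0 hr1).mul_const ‖g‖
        filter_upwards [hten.eventually_lt_const one_pos] with n hn
        have hbpow : 0 < Real.sqrt β ^ n := pow_pos (Real.sqrt_pos.2 hβ0) n
        rw [div_pow, div_mul_eq_mul_div, div_lt_one hbpow] at hn
        calc t n = Real.sqrt α ^ n * ‖g‖ := rfl
          _ < Real.sqrt β ^ n := hn
      filter_upwards [MeasureTheory.ae_eventually_notMem htsum] with x hx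
      apply Filter.limsup_le_of_le (isCoboundedUnder_le_of_le atTop (hu_nonneg x))
      filter_upwards [hx, hsmall, eventually_ge_atTop 1] with n hxn hsn hn1
      have habs : |(T ^ n) g x| < t n := by
        rw [hs, Set.mem_setOf_eq, not_le,
          ENNReal.lt_ofReal_iff_toReal_lt ENNReal.coe_ne_top] at hxn
        rw [← Real.norm_eq_abs, ← coe_nnnorm, ← ENNReal.coe_toReal]
        exact hxn
      calc |(T ^ n) g x| ^ ((1 : ℝ) / n)
          ≤ (Real.sqrt β ^ n) ^ ((1 : ℝ) / n) :=
            Real.rpow_le_rpow (abs_nonneg _) (habs.trans hsn).le (by positivity)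
        _ = Real.sqrt β := by
            rw [← Real.rpow_natCast (Real.sqrt β) n, ← Real.rpow_mul (Real.sqrt_nonneg β),
              mul_one_div, div_self (Nat.cast_ne_zero.2 (by omega)), Real.rpow_one]
  -- combine over a sequence β_k ↓ ρ
  have h1ρ : 0 < 1 - ρ := by linarith
  set β : ℕ → ℝ := fun k => ρ + (1 - ρ) / (k + 2) with hβdef
  have hβρ : ∀ k, ρ < β k := fun k => lt_add_of_pos_right ρ (by positivity)
  have hβ1 : ∀ k : ℕ, β k < 1 := by
    intro k
    have : (1 - ρ) / (k + 2 : ℝ) < 1 - ρ := div_lt_self h1ρ (by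
      have : (0:ℝ) ≤ (k:ℝ) := Nat.cast_nonneg k
      linarith)
    simp only [hβdef]
    linarith
  have hae : ∀ᵐ x ∂m, ∀ k : ℕ,
      limsup (fun n : ℕ => |(T ^ n) g x| ^ ((1 : ℝ) / n)) atTop ≤ Real.sqrt (β k) := by
    rw [ae_all_iff]
    intro k
    refine key (ρ + (1 - ρ) / (k + 3)) (β k) ?_ ?_ (hβ1 k)
    · exact lt_add_of_pos_right ρ (by positivity)
    · have : (1 - ρ) / ((k:ℝ) + 3) < (1 - ρ) / ((k:ℝ) + 2) := by
        apply div_lt_div_of_pos_left h1ρ (by positivity) (by linarith [Nat.cast_nonneg (α := ℝ) k])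
      simp only [hβdef]
      linarith
  have hβten : Tendsto (fun k : ℕ => Real.sqrt (β k)) atTop (nhds (Real.sqrt ρ)) := by
    have h2 : Tendsto (fun k : ℕ => ((k : ℝ) + 2)) atTop atTop :=
      tendsto_atTop_add_const_right atTop 2 tendsto_natCast_atTop_atTop
    have h3 : Tendsto (fun k : ℕ => (1 - ρ) / ((k : ℝ) + 2)) atTop (nhds 0) := by
      simpa [div_eq_mul_inv] using h2.inv_tendsto_atTop.const_mul (1 - ρ)
    have h4 : Tendsto β atTop (nhds ρ) := by
      have := (tendsto_const_nhds (x := ρ) (f := atTop (α := ℕ))).add h3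
      simpa using this
    exact h4.sqrt
  filter_upwards [hae, hpt] with x hx hptx
  have heq : (fun n : ℕ => |(T ^ n) f x - c| ^ ((1 : ℝ) / n)) =
      fun n : ℕ => |(T ^ n) g x| ^ ((1 : ℝ) / n) := funext fun n => by rw [hptx n]
  rw [heq]
  exact ge_of_tendsto' hβten hx
end
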